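/- Let J ⊆ I be finite with ∑_{i∈J} g i ≥ 0 and let j ∈ J satisfy g j < 0. Then with obj(J) = (∑_{i∈J} g i)²/(λ + ∑_{i∈J} h i), λ ≥ 0, h positive, we have obj(J \ {j}) > obj(J) provided λ + ∑_{i∈J\{j\}} h i > 0. -/
import Mathlib

theorem obj_erase_neg_gradient {ι : Type*} [DecidableEq ι]
    (g h : ι → ℝ) (hpos : ∀ i, 0 < h i) (lam : ℝ) (hlam : 0 ≤ lam)
    (obj : Finset ι → ℝ)
    (hobj : ∀ J, obj J = (∑ i ∈ J, g i) ^ 2 / (lam + ∑ i ∈ J, h i))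
    (J : Finset ι) (j : ι) (hjJ : j ∈ J)
    (hsum : 0 ≤ ∑ i ∈ J, g i) (hgj : g j < 0)
    (hden : 0 < lam + ∑ i ∈ J.erase j, h i) :
    obj (J.erase j) > obj J := by
  rw [hobj, hobj]
  have hS : ∑ i ∈ J, g i = g j + ∑ i ∈ J.erase j, g i := (Finset.add_sum_erase J g hjJ).symm
  have hH : ∑ i ∈ J, h i = h j + ∑ i ∈ J.erase j, h i := (Finset.add_sum_erase J h hjJ).symm
  set S := ∑ i ∈ J, g i with hSdef
  set S' := ∑ i ∈ J.erase j, g i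
  set H' := ∑ i ∈ J.erase j, h i
  have hS' : 0 < S' := by nlinarith
  have hDlt : lam + H' < lam + ∑ i ∈ J, h i := by
    have := hpos j; rw [hH]; linarith
  have hnum : S ^ 2 < S' ^ 2 := by nlinarith
  calc S ^ 2 / (lam + ∑ i ∈ J, h i)
      ≤ S ^ 2 / (lam + H') :=
        div_le_div_of_nonneg_left (by positivity) hden (le_of_lt hDlt)
    _ < S' ^ 2 / (lam + H') := (div_lt_div_iff_of_pos_right hden).mpr hnum
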